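/- Let S be a finite set of nonzero points spanning R^d, c : S → R_{>0} a weight function with (1/|S|) Σ_{x∈S} c(x)^2 x x^T = A^{-2} for an invertible symmetric positive definite A, and suppose c(x)^2 ≤ (d+δ)/||Ax||_2^2 for all x ∈ S. Then (1/|S|) Σ_{x∈S} (Ax/||Ax||_2)(Ax/||Ax||_2)^T ⪰ (1/(d+δ)) I_d. -/

import Mathlib

open Matrix

private lemma vmv_mulVec {d : ℕ} (a b v : Fin d → ℝ) :
    Matrix.vecMulVec a b *ᵥ v = (b ⬝ᵥ v) • a := by
  funext i
  simp [Matrix.mulVec, Matrix.vecMulVec_apply, dotProduct, Finset.mul_sum,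
    mul_assoc, mul_comm, mul_left_comm]

private lemma quad_sum {d : ℕ} (T : Finset (Fin d → ℝ)) (F : (Fin d → ℝ) → Matrix (Fin d) (Fin d) ℝ)
    (w : Fin d → ℝ) : w ⬝ᵥ (∑ x ∈ T, F x) *ᵥ w = ∑ x ∈ T, w ⬝ᵥ (F x) *ᵥ w := by
  classical
  induction T using Finset.induction with
  | empty => simp
  | insert a s h ih => simp [Finset.sum_insert h, Matrix.add_mulVec, dotProduct_add, ih]

private lemma quad_single {d : ℕ} (r : ℝ) (a v : Fin d → ℝ) :
    v ⬝ᵥ (r • Matrix.vecMulVec a a) *ᵥ v = r * (a ⬝ᵥ v) ^ 2 := by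
  rw [Matrix.smul_mulVec, dotProduct_smul, vmv_mulVec, dotProduct_smul,
    smul_eq_mul, smul_eq_mul, dotProduct_comm v a]
  ring

theorem stmt_4 {d : ℕ} (hd : 0 < d) (S : Finset (Fin d → ℝ)) (hS : S.Nonempty)
    (hS0 : ∀ x ∈ S, x ≠ 0)
    (hspan : Submodule.span ℝ (S : Set (Fin d → ℝ)) = ⊤)
    (c : (Fin d → ℝ) → ℝ) (hc : ∀ x ∈ S, 0 < c x) (δ : ℝ) (hδ : 0 ≤ δ)
    (A : Matrix (Fin d) (Fin d) ℝ) (hApd : A.PosDef)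
    (hA2 : (A * A)⁻¹ = (S.card : ℝ)⁻¹ • ∑ x ∈ S, (c x) ^ 2 • Matrix.vecMulVec x x)
    (hcb : ∀ x ∈ S, (c x) ^ 2 ≤ (d + δ) / (A.mulVec x ⬝ᵥ A.mulVec x)) :
    ((S.card : ℝ)⁻¹ • ∑ x ∈ S, (A.mulVec x ⬝ᵥ A.mulVec x)⁻¹ •
        Matrix.vecMulVec (A.mulVec x) (A.mulVec x)
      - ((d + δ : ℝ)⁻¹) • (1 : Matrix (Fin d) (Fin d) ℝ)).PosSemidef := by
  classical
  have hAH : A.IsHermitian := hApd.1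
  have hAT : Aᵀ = A := hAH
  have hdet : IsUnit A.det := hApd.det_pos.ne'.isUnit
  have hdδ : (0:ℝ) < (d:ℝ) + δ := by
    have : (1:ℝ) ≤ (d:ℝ) := by exact_mod_cast hd
    linarith
  have hn : (0:ℝ) < (S.card : ℝ) := by exact_mod_cast Finset.card_pos.mpr hS
  -- positivity of ‖Ax‖²
  have hg : ∀ x ∈ S, 0 < A.mulVec x ⬝ᵥ A.mulVec x := by
    intro x hx
    have hAx : A.mulVec x ≠ 0 := by
      intro h
      apply hS0 x hx
      have : A⁻¹ *ᵥ (A *ᵥ x) = x := by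
        rw [Matrix.mulVec_mulVec, Matrix.nonsing_inv_mul A hdet, Matrix.one_mulVec]
      rw [← this, h, Matrix.mulVec_zero]
    have h0 : A.mulVec x ⬝ᵥ A.mulVec x ≠ 0 := fun h => hAx (dotProduct_self_eq_zero.mp h)
    have h1 : 0 ≤ A.mulVec x ⬝ᵥ A.mulVec x :=
      Finset.sum_nonneg fun i _ => mul_self_nonneg _
    exact lt_of_le_of_ne h1 (Ne.symm h0)
  -- key identity: quadratic form of A (A*A)⁻¹ A = 1
  have hkey : ∀ v : Fin d → ℝ,
      v ⬝ᵥ v = (S.card : ℝ)⁻¹ * ∑ x ∈ S, (c x) ^ 2 * (A.mulVec x ⬝ᵥ v) ^ 2 := by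
    intro v
    have h1 := congrArg (fun M : Matrix (Fin d) (Fin d) ℝ => (A *ᵥ v) ⬝ᵥ M *ᵥ (A *ᵥ v)) hA2
    -- left side
    have hL : (A *ᵥ v) ⬝ᵥ (A * A)⁻¹ *ᵥ (A *ᵥ v) = v ⬝ᵥ v := by
      rw [Matrix.mul_inv_rev, Matrix.mulVec_mulVec, Matrix.mul_assoc,
        Matrix.nonsing_inv_mul A hdet, Matrix.mul_one,
        dotProduct_mulVec, ← Matrix.mulVec_transpose, Matrix.transpose_nonsing_inv, hAT,
        Matrix.mulVec_mulVec, Matrix.nonsing_inv_mul A hdet, Matrix.one_mulVec]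
    -- right side
    have hR : (A *ᵥ v) ⬝ᵥ ((S.card : ℝ)⁻¹ • ∑ x ∈ S, (c x) ^ 2 • Matrix.vecMulVec x x) *ᵥ (A *ᵥ v)
        = (S.card : ℝ)⁻¹ * ∑ x ∈ S, (c x) ^ 2 * (A.mulVec x ⬝ᵥ v) ^ 2 := by
      rw [Matrix.smul_mulVec, dotProduct_smul, smul_eq_mul, quad_sum]
      congr 1
      refine Finset.sum_congr rfl fun x hx => ?_
      rw [quad_single, dotProduct_mulVec, ← Matrix.mulVec_transpose, hAT]
    rw [← hL, h1, hR]
  refine Matrix.posSemidef_iff_dotProduct_mulVec.mpr ⟨?_, ?_⟩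
  · -- Hermitian
    have hsym : ∀ x : Fin d → ℝ, (Matrix.vecMulVec x x)ᵀ = Matrix.vecMulVec x x := by
      intro x; ext i j; simp [Matrix.vecMulVec_apply, mul_comm]
    show _ᴴ = _
    rw [Matrix.conjTranspose_eq_transpose_of_trivial, Matrix.transpose_sub,
      Matrix.transpose_smul, Matrix.transpose_smul, Matrix.transpose_one,
      Matrix.transpose_sum]
    congr 1
    congr 1
    exact Finset.sum_congr rfl fun x _ => by rw [Matrix.transpose_smul, hsym]
  · intro v
    have hstar : star v = v := by simp
    rw [hstar, Matrix.sub_mulVec, dotProduct_sub, Matrix.smul_mulVec,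
      dotProduct_smul, Matrix.smul_mulVec, dotProduct_smul, Matrix.one_mulVec,
      quad_sum, smul_eq_mul, smul_eq_mul]
    have expand : ∀ x ∈ S, v ⬝ᵥ ((A.mulVec x ⬝ᵥ A.mulVec x)⁻¹ •
        Matrix.vecMulVec (A.mulVec x) (A.mulVec x)) *ᵥ v
        = (A.mulVec x ⬝ᵥ A.mulVec x)⁻¹ * (A.mulVec x ⬝ᵥ v) ^ 2 := fun x _ => quad_single _ _ _
    rw [Finset.sum_congr rfl expand, hkey v, sub_nonneg, Finset.mul_sum,
      Finset.mul_sum, Finset.mul_sum]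
    refine Finset.sum_le_sum fun x hx => ?_
    have hb := hcb x hx
    have hgx := hg x hx
    have h2 : ((d:ℝ) + δ)⁻¹ * ((c x) ^ 2 * (A.mulVec x ⬝ᵥ v) ^ 2)
        ≤ (A.mulVec x ⬝ᵥ A.mulVec x)⁻¹ * (A.mulVec x ⬝ᵥ v) ^ 2 := by
      have : ((d:ℝ) + δ)⁻¹ * (c x) ^ 2 ≤ (A.mulVec x ⬝ᵥ A.mulVec x)⁻¹ := by
        rw [div_eq_mul_inv] at hb
        calc ((d:ℝ) + δ)⁻¹ * (c x) ^ 2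
            ≤ ((d:ℝ) + δ)⁻¹ * (((d:ℝ) + δ) * (A.mulVec x ⬝ᵥ A.mulVec x)⁻¹) := by
              apply mul_le_mul_of_nonneg_left hb (le_of_lt (inv_pos.mpr hdδ))
          _ = (A.mulVec x ⬝ᵥ A.mulVec x)⁻¹ := by
              field_simp
      calc ((d:ℝ) + δ)⁻¹ * ((c x) ^ 2 * (A.mulVec x ⬝ᵥ v) ^ 2)
          = (((d:ℝ) + δ)⁻¹ * (c x) ^ 2) * (A.mulVec x ⬝ᵥ v) ^ 2 := by ring
        _ ≤ (A.mulVec x ⬝ᵥ A.mulVec x)⁻¹ * (A.mulVec x ⬝ᵥ v) ^ 2 :=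
            mul_le_mul_of_nonneg_right this (sq_nonneg _)
    calc ((d:ℝ) + δ)⁻¹ * ((S.card:ℝ)⁻¹ * ((c x) ^ 2 * (A.mulVec x ⬝ᵥ v) ^ 2))
        = (S.card:ℝ)⁻¹ * (((d:ℝ) + δ)⁻¹ * ((c x) ^ 2 * (A.mulVec x ⬝ᵥ v) ^ 2)) := by ring
      _ ≤ (S.card:ℝ)⁻¹ * ((A.mulVec x ⬝ᵥ A.mulVec x)⁻¹ * (A.mulVec x ⬝ᵥ v) ^ 2) :=
          mul_le_mul_of_nonneg_left h2 (inv_nonneg.mpr hn.le)
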